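/- arXiv:1804.05567 — 3 statements merged into one kernel-verified Lean document; each statement's English description precedes it below -/
import Mathlib

section
/- Let Φ : X → ℝ^d be bounded and measurable, a : ℝ → ℝ continuously differentiable, p a probability measure on X × ℝ with E|y| < ∞, and γ > 0. Suppose π is a probability measure on ℝ^d, with finite first moment, invariant for the SGD recursion for the conditional exponential family: the pushforward of π ⊗ p under (θ, (x,y)) ↦ θ - γ(a'(⟨Φ(x),θ⟩) - y)Φ(x) equals π, and suppose (θ,(x,y)) ↦ (a'(⟨Φ(x),θ⟩) - y)Φ(x) is integrable under π ⊗ p. Then the averaged prediction b(x) = ∫ a'(⟨Φ(x),θ⟩) dπ(θ) satisfies E_{p_x}[ (b(x) - μ**(x)) Φ(x) ] = 0, where μ**(x) = E[y | x]. -/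
open MeasureTheory
open scoped RealInnerProductSpace

private lemma coord_abs_le_norm {d : ℕ} (v : EuclideanSpace ℝ (Fin d)) (i : Fin d) :
    |v i| ≤ ‖v‖ := by
  rw [EuclideanSpace.norm_eq]
  have hs : (0:ℝ) ≤ ∑ j, ‖v j‖ ^ 2 := Finset.sum_nonneg fun j _ => sq_nonneg _
  rw [Real.le_sqrt (abs_nonneg _) hs, sq_abs]
  calc v i ^ 2 = ‖v i‖ ^ 2 := by rw [Real.norm_eq_abs, sq_abs]
    _ ≤ ∑ j, ‖v j‖ ^ 2 := Finset.single_le_sum (f := fun j => ‖v j‖ ^ 2)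
        (fun j _ => sq_nonneg _) (Finset.mem_univ i)


private lemma condexp_step {X : Type*} [MeasurableSpace X] {d : ℕ}
    (p : Measure (X × ℝ)) [IsProbabilityMeasure p]
    (hy : Integrable (fun q : X × ℝ => q.2) p)
    (Φ : X → EuclideanSpace ℝ (Fin d)) (hΦ_meas : Measurable Φ)
    {C : ℝ} (hC : ∀ x, ‖Φ x‖ ≤ C)
    (μss : X → ℝ) (hμss_meas : Measurable μss)
    (hμss : (fun q : X × ℝ => μss q.1) =ᵐ[p]
      p[(fun q : X × ℝ => q.2) | MeasurableSpace.comap (Prod.fst : X × ℝ → X) inferInstance])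
    (hH2 : Integrable (fun z : X × ℝ => z.2 • Φ z.1) p)
    (hIμ : Integrable (fun z : X × ℝ => μss z.1 • Φ z.1) p) :
    ∫ z : X × ℝ, z.2 • Φ z.1 ∂p = ∫ z : X × ℝ, μss z.1 • Φ z.1 ∂p := by
  have hm : MeasurableSpace.comap (Prod.fst : X × ℝ → X) inferInstance
      ≤ (Prod.instMeasurableSpace : MeasurableSpace (X × ℝ)) := measurable_fst.comap_le
  haveI : SigmaFinite (p.trim hm) := by
    haveI : IsFiniteMeasure (p.trim hm) := isFiniteMeasure_trim hm
    infer_instance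
  have hE_coord : ∀ i : Fin d, ∫ z : X × ℝ, z.2 * Φ z.1 i ∂p
      = ∫ z : X × ℝ, μss z.1 * Φ z.1 i ∂p := by
    intro i
    set φ : X × ℝ → ℝ := fun z => Φ z.1 i with hφdef
    have hΦi : Measurable (fun x : X => Φ x i) := by
      have := (EuclideanSpace.proj (𝕜 := ℝ) i).continuous.measurable.comp hΦ_meas
      exact this
    have hφm : StronglyMeasurable[MeasurableSpace.comap (Prod.fst : X × ℝ → X) inferInstance] φ := by
      have hfstm : Measurable[MeasurableSpace.comap (Prod.fst : X × ℝ → X) inferInstance]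
          (Prod.fst : X × ℝ → X) := measurable_iff_comap_le.mpr le_rfl
      exact (hΦi.comp hfstm).stronglyMeasurable
    have hφbound : ∀ z, ‖φ z‖ ≤ max C 0 := fun z => by
      rw [Real.norm_eq_abs]
      exact (coord_abs_le_norm (Φ z.1) i).trans ((hC z.1).trans (le_max_left _ _))
    have hkey : p[φ * (fun z : X × ℝ => z.2)
          | MeasurableSpace.comap (Prod.fst : X × ℝ → X) inferInstance] =ᵐ[p]
        φ * p[(fun z : X × ℝ => z.2)
          | MeasurableSpace.comap (Prod.fst : X × ℝ → X) inferInstance] :=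
      condExp_stronglyMeasurable_mul_of_bound hm hφm hy (max C 0)
        (Filter.Eventually.of_forall hφbound)
    calc ∫ z : X × ℝ, z.2 * Φ z.1 i ∂p
        = ∫ z : X × ℝ, (φ * fun w : X × ℝ => w.2) z ∂p := by
          refine integral_congr_ae (Filter.Eventually.of_forall fun z => ?_)
          simp [hφdef, mul_comm]
      _ = ∫ z : X × ℝ, (p[φ * (fun w : X × ℝ => w.2)
            | MeasurableSpace.comap (Prod.fst : X × ℝ → X) inferInstance]) z ∂p :=
          (integral_condExp hm).symm
      _ = ∫ z : X × ℝ, (φ * p[(fun w : X × ℝ => w.2)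
            | MeasurableSpace.comap (Prod.fst : X × ℝ → X) inferInstance]) z ∂p :=
          integral_congr_ae hkey
      _ = ∫ z : X × ℝ, μss z.1 * Φ z.1 i ∂p := by
          refine integral_congr_ae ?_
          filter_upwards [hμss] with z hz
          simp only [Pi.mul_apply, hφdef]
          rw [← hz, mul_comm]
  refine PiLp.ext fun i => ?_
  have h2 := ((EuclideanSpace.proj (𝕜 := ℝ) i).integral_comp_comm hH2).symm
  have h3 := ((EuclideanSpace.proj (𝕜 := ℝ) i).integral_comp_comm hIμ).symm
  simp only [EuclideanSpace.proj, PiLp.proj_apply, PiLp.smul_apply, smul_eq_mul] at h2 h3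
  rw [h2, h3]
  exact hE_coord i

/-- For constant step-size SGD on a conditional exponential family with
feature map `Φ`, any invariant probability measure `π` yields an averaged prediction
`b(x) = ∫ a'(⟪Φ(x),θ⟫) dπ(θ)` whose deviation from the optimal prediction
`μ**(x) = E[y|x]` is uncorrelated with the features: `E_{p_x}[(b(x) - μ**(x))Φ(x)] = 0`. -/
theorem stationary_averaged_prediction_uncorrelated_with_features
    {X : Type*} [MeasurableSpace X] {d : ℕ}
    (p : Measure (X × ℝ)) [IsProbabilityMeasure p]
    (hy : Integrable (fun q : X × ℝ => q.2) p)
    (Φ : X → EuclideanSpace ℝ (Fin d)) (hΦ_meas : Measurable Φ)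
    (hΦ_bdd : ∃ C : ℝ, ∀ x, ‖Φ x‖ ≤ C)
    (a : ℝ → ℝ) (ha : ContDiff ℝ 1 a)
    (γ : ℝ) (hγ : 0 < γ)
    (π : Measure (EuclideanSpace ℝ (Fin d))) [IsProbabilityMeasure π]
    (hmoment : Integrable (fun θ : EuclideanSpace ℝ (Fin d) => θ) π)
    (hgrad_int : Integrable
      (fun q : EuclideanSpace ℝ (Fin d) × (X × ℝ) =>
        (deriv a ⟪Φ q.2.1, q.1⟫ - q.2.2) • Φ q.2.1) (π.prod p))
    (hinv : Measure.map
      (fun q : EuclideanSpace ℝ (Fin d) × (X × ℝ) =>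
        q.1 - γ • ((deriv a ⟪Φ q.2.1, q.1⟫ - q.2.2) • Φ q.2.1)) (π.prod p) = π)
    (μss : X → ℝ) (hμss_meas : Measurable μss)
    (hμss : (fun q : X × ℝ => μss q.1) =ᵐ[p]
      p[(fun q : X × ℝ => q.2) | MeasurableSpace.comap (Prod.fst : X × ℝ → X) inferInstance])
    (b : X → ℝ) (hb : ∀ x, b x = ∫ θ, deriv a ⟪Φ x, θ⟫ ∂π) :
    ∫ x, (b x - μss x) • Φ x ∂(p.map Prod.fst) = 0 := by
  obtain ⟨C₀, hC₀⟩ := hΦ_bdd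
  set C : ℝ := max C₀ 0 with hCdef
  have hC : ∀ x, ‖Φ x‖ ≤ C := fun x => (hC₀ x).trans (le_max_left _ _)
  -- measurability facts
  have hderiv_cont : Continuous (deriv a) := ha.continuous_deriv le_rfl
  have hinner_meas : Measurable (fun q : EuclideanSpace ℝ (Fin d) × (X × ℝ) =>
      ⟪Φ q.2.1, q.1⟫) :=
    Measurable.inner (hΦ_meas.comp (measurable_fst.comp measurable_snd)) measurable_fst
  have hG_meas : Measurable (fun q : EuclideanSpace ℝ (Fin d) × (X × ℝ) =>
      (deriv a ⟪Φ q.2.1, q.1⟫ - q.2.2) • Φ q.2.1) :=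
    ((hderiv_cont.measurable.comp hinner_meas).sub (measurable_snd.comp measurable_snd)).smul
      (hΦ_meas.comp (measurable_fst.comp measurable_snd))
  -- pushforwards of the product measure
  have hmapfst : (π.prod p).map Prod.fst = π := by
    simp [Measure.map_fst_prod, measure_univ]
  have hmapsnd : (π.prod p).map Prod.snd = p := by
    simp [Measure.map_snd_prod, measure_univ]
  -- integrability of y • Φ x
  have hH2meas : Measurable (fun z : X × ℝ => z.2 • Φ z.1) :=
    measurable_snd.smul (hΦ_meas.comp measurable_fst)
  have hH2 : Integrable (fun z : X × ℝ => z.2 • Φ z.1) p := by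
    refine Integrable.mono' (hy.norm.mul_const C) hH2meas.aestronglyMeasurable
      (Filter.Eventually.of_forall fun z => ?_)
    rw [norm_smul]
    exact mul_le_mul_of_nonneg_left (hC z.1) (norm_nonneg _)
  have hG2 : Integrable (fun q : EuclideanSpace ℝ (Fin d) × (X × ℝ) =>
      q.2.2 • Φ q.2.1) (π.prod p) := by
    have h1 : Integrable (fun z : X × ℝ => z.2 • Φ z.1) ((π.prod p).map Prod.snd) := by
      rw [hmapsnd]; exact hH2
    exact (integrable_map_measure (by rw [hmapsnd]; exact hH2.aestronglyMeasurable)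
      measurable_snd.aemeasurable).mp h1
  have hG1 : Integrable (fun q : EuclideanSpace ℝ (Fin d) × (X × ℝ) =>
      deriv a ⟪Φ q.2.1, q.1⟫ • Φ q.2.1) (π.prod p) := by
    have h := hgrad_int.add hG2
    refine h.congr (Filter.Eventually.of_forall fun q => ?_)
    simp only [Pi.add_apply, sub_smul]
    abel
  have hq1 : Integrable (fun q : EuclideanSpace ℝ (Fin d) × (X × ℝ) => q.1) (π.prod p) := by
    have h1 : Integrable (fun θ : EuclideanSpace ℝ (Fin d) => θ) ((π.prod p).map Prod.fst) := by
      rw [hmapfst]; exact hmoment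
    exact (integrable_map_measure (by rw [hmapfst]; exact hmoment.aestronglyMeasurable)
      measurable_fst.aemeasurable).mp h1
  -- Step A : the mean of the gradient vanishes
  have hfst_int : ∫ θ, θ ∂π
      = ∫ q : EuclideanSpace ℝ (Fin d) × (X × ℝ), q.1 ∂(π.prod p) := by
    have h := integral_map (μ := π.prod p)
      (φ := (Prod.fst : EuclideanSpace ℝ (Fin d) × (X × ℝ) → EuclideanSpace ℝ (Fin d)))
      (f := fun θ : EuclideanSpace ℝ (Fin d) => θ)
      measurable_fst.aemeasurable measurable_id'.aestronglyMeasurable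
    rw [hmapfst] at h
    exact h
  have hTmeas : Measurable (fun q : EuclideanSpace ℝ (Fin d) × (X × ℝ) =>
      q.1 - γ • ((deriv a ⟪Φ q.2.1, q.1⟫ - q.2.2) • Φ q.2.1)) :=
    measurable_fst.sub (hG_meas.const_smul γ)
  have hA : ∫ θ, θ ∂π = ∫ q : EuclideanSpace ℝ (Fin d) × (X × ℝ),
      (q.1 - γ • ((deriv a ⟪Φ q.2.1, q.1⟫ - q.2.2) • Φ q.2.1)) ∂(π.prod p) := by
    have h := integral_map (μ := π.prod p)
      (f := fun θ : EuclideanSpace ℝ (Fin d) => θ)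
      hTmeas.aemeasurable measurable_id'.aestronglyMeasurable
    rw [hinv] at h
    exact h
  have hgrad_zero : ∫ q : EuclideanSpace ℝ (Fin d) × (X × ℝ),
      (deriv a ⟪Φ q.2.1, q.1⟫ - q.2.2) • Φ q.2.1 ∂(π.prod p) = 0 := by
    rw [integral_sub hq1 (show Integrable (fun q : EuclideanSpace ℝ (Fin d) × (X × ℝ) =>
      γ • ((deriv a ⟪Φ q.2.1, q.1⟫ - q.2.2) • Φ q.2.1)) (π.prod p) from hgrad_int.smul γ), integral_smul, ← hfst_int] at hA
    have h0 : γ • ∫ q : EuclideanSpace ℝ (Fin d) × (X × ℝ),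
        (deriv a ⟪Φ q.2.1, q.1⟫ - q.2.2) • Φ q.2.1 ∂(π.prod p) = 0 :=
      sub_eq_self.mp hA.symm
    rcases smul_eq_zero.mp h0 with h | h
    · exact absurd h hγ.ne'
    · exact h
  -- Step B : ∫ G1 = ∫ G2
  have hB : ∫ q : EuclideanSpace ℝ (Fin d) × (X × ℝ),
        deriv a ⟪Φ q.2.1, q.1⟫ • Φ q.2.1 ∂(π.prod p)
      = ∫ q : EuclideanSpace ℝ (Fin d) × (X × ℝ), q.2.2 • Φ q.2.1 ∂(π.prod p) := by
    have h := hgrad_zero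
    simp_rw [sub_smul] at h
    rw [integral_sub hG1 hG2] at h
    exact sub_eq_zero.mp h
  -- Step C : ∫ G1 = ∫ b(x) • Φ(x) dp
  have hC1 : ∫ q : EuclideanSpace ℝ (Fin d) × (X × ℝ),
        deriv a ⟪Φ q.2.1, q.1⟫ • Φ q.2.1 ∂(π.prod p)
      = ∫ z : X × ℝ, b z.1 • Φ z.1 ∂p := by
    rw [integral_prod_symm _ hG1]
    refine integral_congr_ae (Filter.Eventually.of_forall fun z => ?_)
    show (∫ θ, deriv a ⟪Φ z.1, θ⟫ • Φ z.1 ∂π) = b z.1 • Φ z.1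
    rw [integral_smul_const, hb]
  -- Step D : ∫ G2 = ∫ y • Φ(x) dp
  have hD : ∫ q : EuclideanSpace ℝ (Fin d) × (X × ℝ), q.2.2 • Φ q.2.1 ∂(π.prod p)
      = ∫ z : X × ℝ, z.2 • Φ z.1 ∂p := by
    have h := integral_map (μ := π.prod p)
      (φ := (Prod.snd : EuclideanSpace ℝ (Fin d) × (X × ℝ) → X × ℝ))
      (f := fun z : X × ℝ => z.2 • Φ z.1)
      measurable_snd.aemeasurable (by rw [hmapsnd]; exact hH2.aestronglyMeasurable)
    rw [hmapsnd] at h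
    exact h.symm
  -- conditional expectation setup
  have hm : MeasurableSpace.comap (Prod.fst : X × ℝ → X) inferInstance
      ≤ (Prod.instMeasurableSpace : MeasurableSpace (X × ℝ)) := measurable_fst.comap_le
  haveI : SigmaFinite (p.trim hm) := by
    haveI : IsFiniteMeasure (p.trim hm) := isFiniteMeasure_trim hm
    infer_instance
  have hμint : Integrable (fun z : X × ℝ => μss z.1) p :=
    integrable_condExp.congr hμss.symm
  have hHμmeas : Measurable (fun z : X × ℝ => μss z.1 • Φ z.1) :=
    (hμss_meas.comp measurable_fst).smul (hΦ_meas.comp measurable_fst)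
  have hIμ : Integrable (fun z : X × ℝ => μss z.1 • Φ z.1) p := by
    refine Integrable.mono' (hμint.norm.mul_const C) hHμmeas.aestronglyMeasurable
      (Filter.Eventually.of_forall fun z => ?_)
    rw [norm_smul]
    exact mul_le_mul_of_nonneg_left (hC z.1) (norm_nonneg _)
  -- Step E
  have hE : ∫ z : X × ℝ, z.2 • Φ z.1 ∂p = ∫ z : X × ℝ, μss z.1 • Φ z.1 ∂p :=
    condexp_step p hy Φ hΦ_meas hC μss hμss_meas hμss hH2 hIμ
  -- measurability and integrability of b
  have hbm : StronglyMeasurable b := by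
    have hk : StronglyMeasurable (fun xθ : X × EuclideanSpace ℝ (Fin d) =>
        deriv a ⟪Φ xθ.1, xθ.2⟫) :=
      (hderiv_cont.measurable.comp
        (Measurable.inner (hΦ_meas.comp measurable_fst) measurable_snd)).stronglyMeasurable
    have h := hk.integral_prod_right' (ν := π)
    exact (funext hb : b = _) ▸ h
  have hIb : Integrable (fun z : X × ℝ => b z.1 • Φ z.1) p := by
    have h := hG1.integral_prod_right
    refine h.congr (Filter.Eventually.of_forall fun z => ?_)
    show (∫ θ, deriv a ⟪Φ z.1, θ⟫ • Φ z.1 ∂π) = b z.1 • Φ z.1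
    rw [integral_smul_const, hb]
  -- conclusion
  have hFmeas : Measurable (fun x : X => (b x - μss x) • Φ x) :=
    (hbm.measurable.sub hμss_meas).smul hΦ_meas
  calc ∫ x, (b x - μss x) • Φ x ∂(p.map Prod.fst)
      = ∫ z : X × ℝ, (b z.1 - μss z.1) • Φ z.1 ∂p :=
        integral_map measurable_fst.aemeasurable hFmeas.aestronglyMeasurable
    _ = (∫ z : X × ℝ, b z.1 • Φ z.1 ∂p) - ∫ z : X × ℝ, μss z.1 • Φ z.1 ∂p := by
        simp_rw [sub_smul]
        exact integral_sub hIb hIμ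
    _ = 0 := by rw [← hC1, hB, hD, hE, sub_self]
end

section
/- Let Φ : X → ℝ^d be bounded and measurable, a : ℝ → ℝ continuously differentiable with a' Lipschitz-continuous on bounded sets, and p a probability measure on X × ℝ with E|y| < ∞. Then the expected negative log-likelihood F(θ) = E_p[-y⟨Φ(x),θ⟩ + a(⟨Φ(x),θ⟩)] is differentiable at every θ ∈ ℝ^d with gradient ∇F(θ) = E_p[ (a'(⟨Φ(x),θ⟩) - y) Φ(x) ]. -/
open MeasureTheory
open scoped RealInnerProductSpace


open Metric in
lemma lipschitzOnWith_weaken' {α β : Type*} [PseudoEMetricSpace α] [PseudoEMetricSpace β]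
    {K K' : NNReal} {f : α → β} {s : Set α} (hf : LipschitzOnWith K f s) (h : K ≤ K') :
    LipschitzOnWith K' f s := fun _ hx _ hy =>
  (hf hx hy).trans (mul_le_mul_left (ENNReal.coe_le_coe.mpr h) _)

open Metric

/-- The expected negative log-likelihood
`F(θ) = E_p[-y⟨Φ(x),θ⟩ + a(⟨Φ(x),θ⟩)]` of a conditional exponential family with bounded
features and `a` of class `C¹` with locally Lipschitz derivative is differentiable, with
gradient `∇F(θ) = E_p[(a'(⟨Φ(x),θ⟩) - y)Φ(x)]`. -/
theorem expected_nll_has_gradient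
    {X : Type*} [MeasurableSpace X] {d : ℕ}
    (p : Measure (X × ℝ)) [IsProbabilityMeasure p]
    (hy : Integrable (fun q : X × ℝ => q.2) p)
    (Φ : X → EuclideanSpace ℝ (Fin d)) (hΦ_meas : Measurable Φ)
    (hΦ_bdd : ∃ C : ℝ, ∀ x, ‖Φ x‖ ≤ C)
    (a : ℝ → ℝ) (ha : ContDiff ℝ 1 a)
    (ha'_lip : ∀ R : ℝ, 0 < R → ∃ L : NNReal,
      LipschitzOnWith L (deriv a) (Metric.closedBall (0 : ℝ) R)) :
    ∀ θ : EuclideanSpace ℝ (Fin d),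
      HasGradientAt
        (fun θ' : EuclideanSpace ℝ (Fin d) =>
          ∫ q, (-q.2 * ⟪Φ q.1, θ'⟫ + a ⟪Φ q.1, θ'⟫) ∂p)
        (∫ q, (deriv a ⟪Φ q.1, θ⟫ - q.2) • Φ q.1 ∂p) θ := by
  intro θ
  classical
  obtain ⟨C₀, hC₀⟩ := hΦ_bdd
  set C : ℝ := max C₀ 0 with hCdef
  have hC0 : (0:ℝ) ≤ C := le_max_right _ _
  have hCb : ∀ x, ‖Φ x‖ ≤ C := fun x => (hC₀ x).trans (le_max_left _ _)
  set R : ℝ := C * (‖θ‖ + 1) with hRdef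
  have hR0 : 0 ≤ R := mul_nonneg hC0 (by positivity)
  have hderiv_cont : Continuous (deriv a) := ha.continuous_deriv le_rfl
  have hacont : Continuous a := ha.continuous
  have hadiff : Differentiable ℝ a := ha.differentiable one_ne_zero
  -- bound on deriv a on [-R, R]
  obtain ⟨M, hM⟩ := (isCompact_Icc (a := -R) (b := R)).exists_bound_of_continuousOn
    hderiv_cont.continuousOn
  set M' : ℝ := max M 0 with hM'def
  have hM'0 : (0:ℝ) ≤ M' := le_max_right _ _
  have hM' : ∀ t ∈ Set.Icc (-R) R, |deriv a t| ≤ M' := fun t ht => by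
    have h := hM t ht
    rw [Real.norm_eq_abs] at h
    exact h.trans (le_max_left _ _)
  -- bound on a on [-R,R]
  obtain ⟨K, hK⟩ := (isCompact_Icc (a := -R) (b := R)).exists_bound_of_continuousOn
    hacont.continuousOn
  -- membership of inner products
  have hmem : ∀ (x : X), ∀ θ' ∈ ball θ 1, ⟪Φ x, θ'⟫ ∈ Set.Icc (-R) R := by
    intro x θ' hθ'
    have h1 : ‖θ'‖ ≤ ‖θ‖ + 1 := by
      have h := mem_ball_iff_norm.mp hθ'
      calc ‖θ'‖ = ‖θ' - θ + θ‖ := by rw [sub_add_cancel]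
        _ ≤ ‖θ' - θ‖ + ‖θ‖ := norm_add_le _ _
        _ ≤ ‖θ‖ + 1 := by linarith
    have h2 : |⟪Φ x, θ'⟫| ≤ R := by
      calc |⟪Φ x, θ'⟫| ≤ ‖Φ x‖ * ‖θ'‖ := abs_real_inner_le_norm _ _
        _ ≤ C * (‖θ‖ + 1) := mul_le_mul (hCb x) h1 (norm_nonneg _) hC0
    exact Set.mem_Icc.mpr (abs_le.mp h2)
  have hmemθ : ∀ x : X, ⟪Φ x, θ⟫ ∈ Set.Icc (-R) R :=
    fun x => hmem x θ (mem_ball_self one_pos)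
  -- measurability of inner products
  have hinner_meas : ∀ w : EuclideanSpace ℝ (Fin d),
      Measurable fun q : X × ℝ => ⟪Φ q.1, w⟫ :=
    fun w => (hΦ_meas.comp measurable_fst).inner measurable_const
  -- set up the FDeriv family
  set F' : X × ℝ → EuclideanSpace ℝ (Fin d) →L[ℝ] ℝ :=
    fun q => (deriv a ⟪Φ q.1, θ⟫ - q.2) • innerSL ℝ (Φ q.1) with hF'def
  set bound : X × ℝ → ℝ := fun q => (|q.2| + M') * C with hbdef
  have hFmeas : ∀ θ' : EuclideanSpace ℝ (Fin d), AEStronglyMeasurable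
      (fun q : X × ℝ => -q.2 * ⟪Φ q.1, θ'⟫ + a ⟪Φ q.1, θ'⟫) p := fun θ' =>
    ((measurable_snd.neg.mul (hinner_meas θ')).add
      (show Measurable fun q : X × ℝ => a ⟪Φ q.1, θ'⟫ from
        hacont.measurable.comp (hinner_meas θ'))).aestronglyMeasurable
  have key := hasFDerivAt_integral_of_dominated_loc_of_lip
    (μ := p) (x₀ := θ) (s := ball θ 1)
    (F := fun θ' q => -q.2 * ⟪Φ q.1, θ'⟫ + a ⟪Φ q.1, θ'⟫)
    (F' := F') (bound := bound) (ball_mem_nhds θ one_pos)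
    (Filter.Eventually.of_forall fun θ' => hFmeas θ')
    ?hint ?hmeas ?hlip ?hbint ?hdiff
  case hint =>
    apply Integrable.mono' (g := fun q => R * |q.2| + K)
      ((hy.abs.const_mul R).add (integrable_const K)) (hFmeas θ)
    refine Filter.Eventually.of_forall fun q => ?_
    have h1 := hmemθ q.1
    have h2 : |⟪Φ q.1, θ⟫| ≤ R := abs_le.mpr ⟨h1.1, h1.2⟩
    have h3 : ‖a ⟪Φ q.1, θ⟫‖ ≤ K := hK _ h1
    calc ‖-q.2 * ⟪Φ q.1, θ⟫ + a ⟪Φ q.1, θ⟫‖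
        ≤ ‖-q.2 * ⟪Φ q.1, θ⟫‖ + ‖a ⟪Φ q.1, θ⟫‖ := norm_add_le _ _
      _ ≤ R * |q.2| + K := by
          rw [Real.norm_eq_abs, abs_mul, abs_neg]
          have : |q.2| * |⟪Φ q.1, θ⟫| ≤ |q.2| * R :=
            mul_le_mul_of_nonneg_left h2 (abs_nonneg _)
          linarith [h3]
  case hmeas =>
    have : Measurable F' := by
      have hc : Measurable fun q : X × ℝ => deriv a ⟪Φ q.1, θ⟫ - q.2 :=
        (hderiv_cont.measurable.comp (hinner_meas θ)).sub measurable_snd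
      have hΦ' : Measurable fun q : X × ℝ => (innerSL ℝ (Φ q.1) : EuclideanSpace ℝ (Fin d) →L[ℝ] ℝ) :=
        (innerSL ℝ (E := EuclideanSpace ℝ (Fin d))).continuous.measurable.comp (hΦ_meas.comp measurable_fst)
      exact hc.smul hΦ'
    exact this.aestronglyMeasurable
  case hlip =>
    refine Filter.Eventually.of_forall fun q => ?_
    -- Lipschitz of θ' ↦ ⟪Φ q.1, θ'⟫ with constant C
    have hlin : LipschitzWith C.toNNReal (fun θ' : EuclideanSpace ℝ (Fin d) => ⟪Φ q.1, θ'⟫) := by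
      refine LipschitzWith.of_dist_le_mul fun x y => ?_
      rw [Real.dist_eq, dist_eq_norm]
      have : ⟪Φ q.1, x⟫ - ⟪Φ q.1, y⟫ = ⟪Φ q.1, x - y⟫ := by
        rw [inner_sub_right]
      rw [this]
      calc |⟪Φ q.1, x - y⟫| ≤ ‖Φ q.1‖ * ‖x - y‖ := abs_real_inner_le_norm _ _
        _ ≤ C * ‖x - y‖ := mul_le_mul_of_nonneg_right (hCb q.1) (norm_nonneg _)
        _ = C.toNNReal * ‖x - y‖ := by rw [Real.coe_toNNReal _ hC0]
    -- Lipschitz of a on Icc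
    have hal : LipschitzOnWith M'.toNNReal a (Set.Icc (-R) R) := by
      refine (convex_Icc _ _).lipschitzOnWith_of_nnnorm_deriv_le
        (fun t _ => hadiff t) (fun t ht => ?_)
      rw [← NNReal.coe_le_coe, coe_nnnorm, Real.coe_toNNReal _ hM'0, Real.norm_eq_abs]
      exact hM' t ht
    have hcomp : LipschitzOnWith (M'.toNNReal * C.toNNReal)
        ((a ∘ fun θ' : EuclideanSpace ℝ (Fin d) => ⟪Φ q.1, θ'⟫)) (ball θ 1) :=
      hal.comp hlin.lipschitzOnWith (fun θ' hθ' => hmem q.1 θ' hθ')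
    have hmul : LipschitzWith (q.2.nnabs * C.toNNReal)
        (fun θ' : EuclideanSpace ℝ (Fin d) => -q.2 * ⟪Φ q.1, θ'⟫) := by
      refine LipschitzWith.of_dist_le_mul fun x y => ?_
      rw [Real.dist_eq, dist_eq_norm]
      have : -q.2 * ⟪Φ q.1, x⟫ - -q.2 * ⟪Φ q.1, y⟫ = -q.2 * ⟪Φ q.1, x - y⟫ := by
        rw [inner_sub_right]; ring
      rw [this, abs_mul, abs_neg]
      rw [NNReal.coe_mul, Real.coe_nnabs, Real.coe_toNNReal _ hC0]
      calc |q.2| * |⟪Φ q.1, x - y⟫| ≤ |q.2| * (C * ‖x - y‖) := by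
            refine mul_le_mul_of_nonneg_left ?_ (abs_nonneg _)
            calc |⟪Φ q.1, x - y⟫| ≤ ‖Φ q.1‖ * ‖x - y‖ := abs_real_inner_le_norm _ _
              _ ≤ C * ‖x - y‖ := mul_le_mul_of_nonneg_right (hCb q.1) (norm_nonneg _)
        _ = |q.2| * C * ‖x - y‖ := by ring
    have hsum : LipschitzOnWith (q.2.nnabs * C.toNNReal + M'.toNNReal * C.toNNReal)
        (fun θ' : EuclideanSpace ℝ (Fin d) => -q.2 * ⟪Φ q.1, θ'⟫ + a ⟪Φ q.1, θ'⟫) (ball θ 1) :=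
      hmul.lipschitzOnWith.add hcomp
    refine lipschitzOnWith_weaken' hsum ?_
    rw [← NNReal.coe_le_coe]
    have hb : (0:ℝ) ≤ (|q.2| + M') * C := by positivity
    rw [NNReal.coe_add, NNReal.coe_mul, NNReal.coe_mul, Real.coe_nnabs,
      Real.coe_toNNReal _ hC0, Real.coe_toNNReal _ hM'0, Real.coe_nnabs,
      abs_of_nonneg hb]
    ring_nf
    exact le_refl _
  case hbint =>
    simpa [hbdef, add_mul, Pi.add_def] using ((hy.abs.mul_const C).add (integrable_const (M' * C)))
  case hdiff =>
    refine Filter.Eventually.of_forall fun q => ?_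
    have h1 : HasFDerivAt (fun θ' : EuclideanSpace ℝ (Fin d) => ⟪Φ q.1, θ'⟫) (innerSL ℝ (Φ q.1)) θ :=
      (innerSL ℝ (Φ q.1)).hasFDerivAt
    have h2 : HasFDerivAt (fun θ' : EuclideanSpace ℝ (Fin d) => a ⟪Φ q.1, θ'⟫)
        (deriv a ⟪Φ q.1, θ⟫ • innerSL ℝ (Φ q.1)) θ :=
      (hadiff ⟪Φ q.1, θ⟫).hasDerivAt.comp_hasFDerivAt θ h1
    have h3 : HasFDerivAt (fun θ' : EuclideanSpace ℝ (Fin d) => -q.2 * ⟪Φ q.1, θ'⟫)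
        ((-q.2) • innerSL ℝ (Φ q.1)) θ := h1.const_mul (-q.2)
    have h4 := h3.add h2
    convert h4 using 1
    ext w
    simp [hF'def]
    ring
    rw [hF'def]
    simp only [sub_smul, neg_smul]
    abel
  obtain ⟨hF'int, hkey⟩ := key
  rw [hasGradientAt_iff_hasFDerivAt]
  convert hkey using 1
  · rfl
  · rfl
  -- identify the integral of F' with toDual of the vector integral
  have heq : ∀ q : X × ℝ, F' q =
      InnerProductSpace.toDual ℝ (EuclideanSpace ℝ (Fin d)) ((deriv a ⟪Φ q.1, θ⟫ - q.2) • Φ q.1) := by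
    intro q
    ext w
    simp [hF'def, InnerProductSpace.toDual_apply_apply, real_inner_smul_left]
  calc InnerProductSpace.toDual ℝ (EuclideanSpace ℝ (Fin d)) (∫ q, (deriv a ⟪Φ q.1, θ⟫ - q.2) • Φ q.1 ∂p)
      = ∫ q, InnerProductSpace.toDual ℝ (EuclideanSpace ℝ (Fin d)) ((deriv a ⟪Φ q.1, θ⟫ - q.2) • Φ q.1) ∂p := by
        exact ((InnerProductSpace.toDual ℝ (EuclideanSpace ℝ (Fin d))).toContinuousLinearEquiv.integral_comp_comm
          (fun q : X × ℝ => (deriv a ⟪Φ q.1, θ⟫ - q.2) • Φ q.1)).symm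
    _ = ∫ q, F' q ∂p := by simp_rw [heq]
end

section
/- Let Φ : X → ℝ^d be bounded and measurable, a : ℝ → ℝ continuously differentiable, p a probability measure on X × ℝ with E|y| < ∞, and γ > 0, λ > 0. Suppose π is a probability measure on ℝ^d with finite first moment that is invariant for the regularized SGD recursion: the pushforward of π ⊗ p under (θ,(x,y)) ↦ θ - γ[ (a'(⟨Φ(x),θ⟩) - y)Φ(x) + λθ ] equals π, and suppose (θ,(x,y)) ↦ (a'(⟨Φ(x),θ⟩) - y)Φ(x) + λθ is integrable under π ⊗ p. Then, with μ**(x) = E[y|x] and μ̄̄(x) = ∫ a'(⟨Φ(x),θ⟩) dπ(θ), one has E_{p_x}[ (μ**(x) - μ̄̄(x)) Φ(x) ] = λ ∫ θ dπ(θ). -/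
open MeasureTheory
open scoped RealInnerProductSpace

/-- For regularized constant step-size SGD
`θ_n = θ_{n-1} - γ[(a'(⟨Φ(x_n),θ_{n-1}⟩) - y_n)Φ(x_n) + λθ_{n-1}]`, any invariant
probability measure `π` satisfies
`E_{p_x}[(μ**(x) - μ̄̄(x))Φ(x)] = λ ∫ θ dπ(θ)`, where `μ̄̄(x) = ∫ a'(⟨Φ(x),θ⟩) dπ(θ)` is
the averaged prediction and `μ**(x) = E[y|x]`. -/
theorem regularized_stationary_averaged_prediction_identity
    {X : Type*} [MeasurableSpace X] {d : ℕ}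
    (p : Measure (X × ℝ)) [IsProbabilityMeasure p]
    (hy : Integrable (fun q : X × ℝ => q.2) p)
    (Φ : X → EuclideanSpace ℝ (Fin d)) (hΦ_meas : Measurable Φ)
    (hΦ_bdd : ∃ C : ℝ, ∀ x, ‖Φ x‖ ≤ C)
    (a : ℝ → ℝ) (ha : ContDiff ℝ 1 a)
    (γ lam : ℝ) (hγ : 0 < γ) (hlam : 0 < lam)
    (π : Measure (EuclideanSpace ℝ (Fin d))) [IsProbabilityMeasure π]
    (hmoment : Integrable (fun θ : EuclideanSpace ℝ (Fin d) => θ) π)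
    (hgrad_int : Integrable
      (fun q : EuclideanSpace ℝ (Fin d) × (X × ℝ) =>
        (deriv a ⟪Φ q.2.1, q.1⟫ - q.2.2) • Φ q.2.1 + lam • q.1) (π.prod p))
    (hinv : Measure.map
      (fun q : EuclideanSpace ℝ (Fin d) × (X × ℝ) =>
        q.1 - γ • ((deriv a ⟪Φ q.2.1, q.1⟫ - q.2.2) • Φ q.2.1 + lam • q.1)) (π.prod p) = π)
    (μss : X → ℝ) (hμss_meas : Measurable μss)
    (hμss : (fun q : X × ℝ => μss q.1) =ᵐ[p]
      p[(fun q : X × ℝ => q.2) | MeasurableSpace.comap (Prod.fst : X × ℝ → X) inferInstance])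
    (μbb : X → ℝ) (hμbb : ∀ x, μbb x = ∫ θ, deriv a ⟪Φ x, θ⟫ ∂π) :
    ∫ x, (μss x - μbb x) • Φ x ∂(p.map Prod.fst) = lam • ∫ θ, θ ∂π := by
  obtain ⟨C, hC⟩ := hΦ_bdd
  have hderiv_cont : Continuous (deriv a) := ha.continuous_deriv le_rfl
  -- projections are measure preserving
  have hfst : MeasurePreserving (Prod.fst : EuclideanSpace ℝ (Fin d) × (X × ℝ) → _)
      (π.prod p) π := ⟨measurable_fst, by rw [Measure.map_fst_prod]; simp⟩
  have hsnd : MeasurePreserving (Prod.snd : EuclideanSpace ℝ (Fin d) × (X × ℝ) → _)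
      (π.prod p) p := ⟨measurable_snd, by rw [Measure.map_snd_prod]; simp⟩
  -- measurability facts
  have hinner_meas : Measurable (fun q : EuclideanSpace ℝ (Fin d) × (X × ℝ) =>
      deriv a ⟪Φ q.2.1, q.1⟫) :=
    hderiv_cont.measurable.comp
      ((hΦ_meas.comp (measurable_fst.comp measurable_snd)).inner measurable_fst)
  -- integrability of θ on the product
  have hθint : Integrable (fun q : EuclideanSpace ℝ (Fin d) × (X × ℝ) => q.1) (π.prod p) :=
    (hfst.integrable_comp hmoment.aestronglyMeasurable).2 hmoment
  have hθeq : ∫ q : EuclideanSpace ℝ (Fin d) × (X × ℝ), q.1 ∂(π.prod p) = ∫ θ, θ ∂π := by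
    conv_rhs => rw [← hfst.map_eq]
    rw [integral_map measurable_fst.aemeasurable
      (by rw [hfst.map_eq]; exact hmoment.aestronglyMeasurable)]
  have hlamθint : Integrable (fun q : EuclideanSpace ℝ (Fin d) × (X × ℝ) => lam • q.1)
      (π.prod p) := hθint.smul lam
  have hγGint : Integrable (fun q : EuclideanSpace ℝ (Fin d) × (X × ℝ) =>
      γ • ((deriv a ⟪Φ q.2.1, q.1⟫ - q.2.2) • Φ q.2.1 + lam • q.1)) (π.prod p) :=
    hgrad_int.smul γ
  have hTmeas : Measurable (fun q : EuclideanSpace ℝ (Fin d) × (X × ℝ) =>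
      q.1 - γ • ((deriv a ⟪Φ q.2.1, q.1⟫ - q.2.2) • Φ q.2.1 + lam • q.1)) := by
    apply Measurable.sub measurable_fst
    refine Measurable.const_smul (g := fun q : EuclideanSpace ℝ (Fin d) × (X × ℝ) =>
      (deriv a ⟪Φ q.2.1, q.1⟫ - q.2.2) • Φ q.2.1 + lam • q.1) ?_ γ
    exact ((hinner_meas.sub (measurable_snd.comp measurable_snd)).smul
      (hΦ_meas.comp (measurable_fst.comp measurable_snd))).add (measurable_fst.const_smul lam)
  -- from invariance: the mean of the full gradient vanishes
  have hG0 : ∫ q : EuclideanSpace ℝ (Fin d) × (X × ℝ),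
      ((deriv a ⟪Φ q.2.1, q.1⟫ - q.2.2) • Φ q.2.1 + lam • q.1) ∂(π.prod p) = 0 := by
    have hkey : ∫ θ, θ ∂π = ∫ q : EuclideanSpace ℝ (Fin d) × (X × ℝ),
        (q.1 - γ • ((deriv a ⟪Φ q.2.1, q.1⟫ - q.2.2) • Φ q.2.1 + lam • q.1)) ∂(π.prod p) := by
      conv_lhs => rw [← hinv]
      exact integral_map hTmeas.aemeasurable
        (by rw [hinv]; exact hmoment.aestronglyMeasurable)
    rw [integral_sub hθint hγGint, integral_smul, hθeq] at hkey
    have h0 := sub_eq_self.mp hkey.symm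
    rcases smul_eq_zero.mp h0 with h | h
    · exact absurd h hγ.ne'
    · exact h
  -- first piece: (a' - y) • Φ
  have hh1int : Integrable (fun q : EuclideanSpace ℝ (Fin d) × (X × ℝ) =>
      (deriv a ⟪Φ q.2.1, q.1⟫ - q.2.2) • Φ q.2.1) (π.prod p) := by
    refine (hgrad_int.sub hlamθint).congr (Filter.Eventually.of_forall fun q => ?_)
    simp [add_sub_cancel_right]
  have hInth1 : ∫ q : EuclideanSpace ℝ (Fin d) × (X × ℝ),
      (deriv a ⟪Φ q.2.1, q.1⟫ - q.2.2) • Φ q.2.1 ∂(π.prod p) = -(lam • ∫ θ, θ ∂π) := by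
    rw [integral_add hh1int hlamθint, integral_smul, hθeq] at hG0
    exact eq_neg_of_add_eq_zero_left hG0
  -- second piece: y • Φ
  have hyΦmeas : Measurable (fun xy : X × ℝ => xy.2 • Φ xy.1) :=
    measurable_snd.smul (hΦ_meas.comp measurable_fst)
  have hyΦp : Integrable (fun xy : X × ℝ => xy.2 • Φ xy.1) p := by
    refine Integrable.mono' (hy.norm.const_mul C) hyΦmeas.aestronglyMeasurable
      (Filter.Eventually.of_forall fun xy => ?_)
    rw [norm_smul]
    calc ‖xy.2‖ * ‖Φ xy.1‖ ≤ ‖xy.2‖ * C := by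
          exact mul_le_mul_of_nonneg_left (hC _) (norm_nonneg _)
      _ = C * ‖xy.2‖ := mul_comm _ _
  have hyΦ2int : Integrable (fun q : EuclideanSpace ℝ (Fin d) × (X × ℝ) =>
      q.2.2 • Φ q.2.1) (π.prod p) :=
    (hsnd.integrable_comp hyΦp.aestronglyMeasurable).2 hyΦp
  have hInth2 : ∫ q : EuclideanSpace ℝ (Fin d) × (X × ℝ), q.2.2 • Φ q.2.1 ∂(π.prod p)
      = ∫ xy : X × ℝ, xy.2 • Φ xy.1 ∂p := by
    conv_rhs => rw [← hsnd.map_eq]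
    rw [integral_map measurable_snd.aemeasurable
      (by rw [hsnd.map_eq]; exact hyΦp.aestronglyMeasurable)]
  -- third piece: a' • Φ
  have hh3int : Integrable (fun q : EuclideanSpace ℝ (Fin d) × (X × ℝ) =>
      deriv a ⟪Φ q.2.1, q.1⟫ • Φ q.2.1) (π.prod p) := by
    refine (hh1int.add hyΦ2int).congr (Filter.Eventually.of_forall fun q => ?_)
    simp only [Pi.add_apply]
    rw [sub_smul, sub_add_cancel]
  have hInth3 : ∫ q : EuclideanSpace ℝ (Fin d) × (X × ℝ),
      deriv a ⟪Φ q.2.1, q.1⟫ • Φ q.2.1 ∂(π.prod p)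
      = -(lam • ∫ θ, θ ∂π) + ∫ xy : X × ℝ, xy.2 • Φ xy.1 ∂p := by
    rw [← hInth1, ← hInth2, ← integral_add hh1int hyΦ2int]
    congr 1
    funext q
    rw [sub_smul, sub_add_cancel]
  -- integrability of μbb • Φ via Fubini
  have hμbbΦint : Integrable (fun xy : X × ℝ => μbb xy.1 • Φ xy.1) p := by
    refine hh3int.integral_prod_right.congr (Filter.Eventually.of_forall fun xy => ?_)
    show (∫ θ, deriv a ⟪Φ xy.1, θ⟫ • Φ xy.1 ∂π) = μbb xy.1 • Φ xy.1
    rw [integral_smul_const, hμbb]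
  -- Fubini identity
  have hFubini : ∫ xy : X × ℝ, μbb xy.1 • Φ xy.1 ∂p
      = ∫ q : EuclideanSpace ℝ (Fin d) × (X × ℝ),
          deriv a ⟪Φ q.2.1, q.1⟫ • Φ q.2.1 ∂(π.prod p) := by
    calc ∫ xy : X × ℝ, μbb xy.1 • Φ xy.1 ∂p
        = ∫ xy : X × ℝ, (∫ θ, deriv a ⟪Φ xy.1, θ⟫ • Φ xy.1 ∂π) ∂p := by
          refine integral_congr_ae (Filter.Eventually.of_forall fun xy => ?_)
          show μbb xy.1 • Φ xy.1 = ∫ θ, deriv a ⟪Φ xy.1, θ⟫ • Φ xy.1 ∂π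
          rw [integral_smul_const, hμbb]
      _ = ∫ θ, (∫ xy : X × ℝ, deriv a ⟪Φ xy.1, θ⟫ • Φ xy.1 ∂p) ∂π :=
          (integral_integral_swap (by exact hh3int)).symm
      _ = ∫ q : EuclideanSpace ℝ (Fin d) × (X × ℝ),
            deriv a ⟪Φ q.2.1, q.1⟫ • Φ q.2.1 ∂(π.prod p) :=
          integral_integral (by exact hh3int)
  -- conditional expectation step
  have hm : MeasurableSpace.comap (Prod.fst : X × ℝ → X) inferInstance
      ≤ (inferInstance : MeasurableSpace (X × ℝ)) := measurable_fst.comap_le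
  have hμss_int : Integrable (fun xy : X × ℝ => μss xy.1) p :=
    integrable_condExp.congr hμss.symm
  have hμssΦint : Integrable (fun xy : X × ℝ => μss xy.1 • Φ xy.1) p := by
    refine Integrable.mono' (hμss_int.norm.const_mul C)
      (((hμss_meas.comp measurable_fst)).smul (hΦ_meas.comp measurable_fst)).aestronglyMeasurable
      (Filter.Eventually.of_forall fun xy => ?_)
    rw [norm_smul]
    calc ‖μss xy.1‖ * ‖Φ xy.1‖ ≤ ‖μss xy.1‖ * C :=
          mul_le_mul_of_nonneg_left (hC _) (norm_nonneg _)
      _ = C * ‖μss xy.1‖ := mul_comm _ _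
  have hCE : ∫ xy : X × ℝ, xy.2 • Φ xy.1 ∂p = ∫ xy : X × ℝ, μss xy.1 • Φ xy.1 ∂p := by
    refine PiLp.ext fun i => ?_
    set L : EuclideanSpace ℝ (Fin d) →L[ℝ] ℝ := EuclideanSpace.proj i with hLdef
    show L (∫ xy : X × ℝ, xy.2 • Φ xy.1 ∂p) = L (∫ xy : X × ℝ, μss xy.1 • Φ xy.1 ∂p)
    rw [← L.integral_comp_comm hyΦp, ← L.integral_comp_comm hμssΦint]
    simp only [_root_.map_smul, smul_eq_mul]
    -- now: ∫ xy.2 * L (Φ xy.1) = ∫ μss xy.1 * L (Φ xy.1)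
    have hgm : StronglyMeasurable[MeasurableSpace.comap (Prod.fst : X × ℝ → X) inferInstance]
        (fun xy : X × ℝ => L (Φ xy.1)) :=
      ((L.continuous.measurable.comp hΦ_meas).comp
        (Measurable.of_comap_le le_rfl : Measurable[MeasurableSpace.comap
          (Prod.fst : X × ℝ → X) inferInstance] (Prod.fst : X × ℝ → X))).stronglyMeasurable
    have hgy_int : Integrable ((fun xy : X × ℝ => L (Φ xy.1)) * fun xy : X × ℝ => xy.2) p := by
      refine Integrable.mono' (hy.norm.const_mul (‖L‖ * C))
        ((L.continuous.measurable.comp (hΦ_meas.comp measurable_fst)).mul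
          measurable_snd).aestronglyMeasurable
        (Filter.Eventually.of_forall fun xy => ?_)
      simp only [Pi.mul_apply]
      rw [norm_mul]
      have h1 : ‖L (Φ xy.1)‖ ≤ ‖L‖ * C := by
        calc ‖L (Φ xy.1)‖ ≤ ‖L‖ * ‖Φ xy.1‖ := L.le_opNorm _
          _ ≤ ‖L‖ * C := mul_le_mul_of_nonneg_left (hC _) (norm_nonneg _)
      exact mul_le_mul_of_nonneg_right h1 (norm_nonneg _)
    have hpull := condExp_mul_of_stronglyMeasurable_left hgm hgy_int hy
    calc ∫ xy : X × ℝ, xy.2 * L (Φ xy.1) ∂p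
        = ∫ xy : X × ℝ, ((fun xy : X × ℝ => L (Φ xy.1)) * fun xy : X × ℝ => xy.2) xy ∂p := by
          refine integral_congr_ae (Filter.Eventually.of_forall fun xy => ?_)
          simp [mul_comm]
      _ = ∫ xy, (p[((fun xy : X × ℝ => L (Φ xy.1)) * fun xy : X × ℝ => xy.2)
            | MeasurableSpace.comap (Prod.fst : X × ℝ → X) inferInstance]) xy ∂p :=
          (integral_condExp hm).symm
      _ = ∫ xy : X × ℝ, L (Φ xy.1) * (p[(fun xy : X × ℝ => xy.2)
            | MeasurableSpace.comap (Prod.fst : X × ℝ → X) inferInstance]) xy ∂p := by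
          refine integral_congr_ae (hpull.mono fun xy h => ?_)
          simpa using h
      _ = ∫ xy : X × ℝ, μss xy.1 * L (Φ xy.1) ∂p := by
          refine integral_congr_ae ?_
          filter_upwards [hμss] with xy h
          rw [← h, mul_comm]
  -- measurability of μbb
  have hμbb_meas : Measurable μbb := by
    have hfun : μbb = fun x => ∫ θ, deriv a ⟪Φ x, θ⟫ ∂π := funext hμbb
    rw [hfun]
    have hsm : StronglyMeasurable (fun q : X × EuclideanSpace ℝ (Fin d) =>
        deriv a ⟪Φ q.1, q.2⟫) :=
      (hderiv_cont.measurable.comp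
        ((hΦ_meas.comp measurable_fst).inner measurable_snd)).stronglyMeasurable
    exact hsm.integral_prod_right'.measurable
  -- put everything together
  calc ∫ x, (μss x - μbb x) • Φ x ∂(p.map Prod.fst)
      = ∫ xy : X × ℝ, (μss xy.1 - μbb xy.1) • Φ xy.1 ∂p := by
        rw [integral_map (f := fun x => (μss x - μbb x) • Φ x) measurable_fst.aemeasurable
          ((hμss_meas.sub hμbb_meas).smul hΦ_meas).aestronglyMeasurable]
    _ = ∫ xy : X × ℝ, μss xy.1 • Φ xy.1 ∂p - ∫ xy : X × ℝ, μbb xy.1 • Φ xy.1 ∂p := by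
        rw [← integral_sub hμssΦint hμbbΦint]
        congr 1
        funext xy
        rw [sub_smul]
    _ = lam • ∫ θ, θ ∂π := by
        rw [← hCE, hFubini, hInth3]
        abel
end
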